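/- Let (S_n)_{n≥0} be a square integrable martingale with S_0 = 0 adapted to (F_n), and suppose that for each n and every a > 0, E[T_a(S_n - S_{n-1}) | F_{n-1}] ≤ 0 almost surely, where T_a(x) = min(|x|, a)·sign(x). Then for all x > 0 and y > 0, P(S_n ≥ x and Σ_{i=1}^n (S_i - S_{i-1})² ≤ y) ≤ exp(-x²/(2y)). -/

import Mathlib

open MeasureTheory Finset

section BTAux
open Set Filter

noncomputable def btE (t a : ℝ) : ℝ := Real.exp (-(t*a) - t^2*a^2/2)
noncomputable def btW (t a : ℝ) : ℝ := (t + t^2*a) * btE t a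
noncomputable def btK (t a : ℝ) : ℝ := ((t + t^2*a)^2 - t^2) * btE t a
noncomputable def btA (t a : ℝ) : ℝ := 1 - btE t a - a * btW t a

lemma btE_pos (t a : ℝ) : 0 < btE t a := Real.exp_pos _

lemma continuous_btE (t : ℝ) : Continuous (btE t) := by
  unfold btE; fun_prop

lemma continuous_btK (t : ℝ) : Continuous (btK t) := by
  unfold btK btE; fun_prop

lemma btK_nonneg {t : ℝ} (ht : 0 ≤ t) {a : ℝ} (ha : 0 ≤ a) : 0 ≤ btK t a := by
  have h1 : 0 ≤ (t + t^2*a)^2 - t^2 := by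
    nlinarith [mul_nonneg (mul_nonneg ht (mul_nonneg ht ht)) ha,
      mul_nonneg (mul_nonneg (mul_nonneg ht ht) (mul_nonneg ht ht)) (mul_nonneg ha ha)]
  exact mul_nonneg h1 (btE_pos t a).le

lemma hasDerivAt_btE (t a : ℝ) : HasDerivAt (btE t) (-(btW t a)) a := by
  have h1 : HasDerivAt (fun a : ℝ => -(t*a) - t^2*a^2/2) (-t - t^2*a) a := by
    have h2 : HasDerivAt (fun a : ℝ => t*a) t a := by
      simpa using (hasDerivAt_id a).const_mul t
    have h3 : HasDerivAt (fun a : ℝ => t^2*a^2/2) (t^2*a) a := by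
      have := ((hasDerivAt_pow 2 a).const_mul (t^2)).div_const 2
      simpa using this.congr_deriv (by ring)
    exact h2.neg.sub h3
  exact (h1.exp).congr_deriv (by unfold btW btE; ring)

lemma hasDerivAt_neg_btW (t a : ℝ) : HasDerivAt (fun a => -(btW t a)) (btK t a) a := by
  have h1 : HasDerivAt (btW t) (t^2 * btE t a + (t + t^2*a) * (-(btW t a))) a := by
    have h2 : HasDerivAt (fun a : ℝ => t + t^2*a) (t^2) a := by
      simpa using ((hasDerivAt_id a).const_mul (t^2)).const_add t
    exact h2.mul (hasDerivAt_btE t a)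
  exact h1.neg.congr_deriv (by unfold btK btW; ring)

lemma hasDerivAt_btA (t a : ℝ) : HasDerivAt (btA t) (a * btK t a) a := by
  have hW : HasDerivAt (btW t) (-(btK t a)) a := by
    have := (hasDerivAt_neg_btW t a).neg
    exact this.congr_of_eventuallyEq (Filter.Eventually.of_forall fun x => by simp)
  have h1 : HasDerivAt (fun a => a * btW t a) (1 * btW t a + a * (-(btK t a))) a :=
    (hasDerivAt_id a).mul hW
  have h2 : HasDerivAt (btA t) (0 - (-(btW t a)) - (1 * btW t a + a * (-(btK t a)))) a :=
    ((hasDerivAt_const a (1:ℝ)).sub (hasDerivAt_btE t a)).sub h1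
  exact h2.congr_deriv (by ring)

lemma tendsto_pow_mul_btE {t : ℝ} (ht : 0 < t) (n : ℕ) :
    Tendsto (fun a => a ^ n * btE t a) atTop (nhds 0) := by
  have h1 : Tendsto (fun a : ℝ => (t*a) ^ n * Real.exp (-(t*a))) atTop (nhds 0) :=
    (Real.tendsto_pow_mul_exp_neg_atTop_nhds_zero n).comp (tendsto_id.const_mul_atTop ht)
  have h2 : Tendsto (fun a : ℝ => (1/t^n) * ((t*a) ^ n * Real.exp (-(t*a)))) atTop
      (nhds ((1/t^n) * 0)) := h1.const_mul _
  rw [mul_zero] at h2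
  apply squeeze_zero_norm' _ h2
  filter_upwards [eventually_ge_atTop (0:ℝ)] with a ha
  have htn : (0:ℝ) < t^n := pow_pos ht n
  have h3 : (1/t^n) * ((t*a) ^ n * Real.exp (-(t*a))) = a^n * Real.exp (-(t*a)) := by
    rw [mul_pow]; field_simp
  rw [h3, Real.norm_eq_abs, abs_of_nonneg (mul_nonneg (pow_nonneg ha n) (btE_pos t a).le)]
  unfold btE
  have : Real.exp (-(t*a) - t^2*a^2/2) ≤ Real.exp (-(t*a)) :=
    Real.exp_le_exp.2 (by nlinarith [sq_nonneg (t*a)])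
  exact mul_le_mul_of_nonneg_left this (by positivity)

lemma tendsto_neg_btW {t : ℝ} (ht : 0 < t) :
    Tendsto (fun a => -(btW t a)) atTop (nhds 0) := by
  have h0 := tendsto_pow_mul_btE ht 0
  have h1 := tendsto_pow_mul_btE ht 1
  have h := ((h0.const_mul t).add (h1.const_mul (t^2))).neg
  simp only [mul_zero, add_zero, neg_zero] at h
  apply h.congr
  intro a
  unfold btW
  ring

lemma tendsto_btA {t : ℝ} (ht : 0 < t) : Tendsto (btA t) atTop (nhds 1) := by
  have h0 := tendsto_pow_mul_btE ht 0
  have h1 := tendsto_pow_mul_btE ht 1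
  have h2 := tendsto_pow_mul_btE ht 2
  have h : Tendsto (fun a => 1 - (a^0 * btE t a) - (t * (a^1 * btE t a) + t^2 * (a^2 * btE t a)))
      atTop (nhds (1 - 0 - (t * 0 + t^2 * 0))) :=
    ((tendsto_const_nhds.sub h0).sub ((h1.const_mul t).add (h2.const_mul (t^2))))
  simp only [mul_zero, add_zero, sub_zero] at h
  apply h.congr
  intro a
  unfold btA btW
  ring

lemma integrableOn_btK {t : ℝ} (ht : 0 < t) {b : ℝ} (hb : 0 ≤ b) :
    IntegrableOn (btK t) (Ioi b) := by
  apply integrableOn_Ioi_deriv_of_nonneg' (g := fun a => -(btW t a)) (l := 0)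
    (fun x _ => hasDerivAt_neg_btW t x)
    (fun x hx => btK_nonneg ht.le (hb.trans hx.le))
    (tendsto_neg_btW ht)

lemma integral_btK_Ioi {t : ℝ} (ht : 0 < t) {b : ℝ} (hb : 0 ≤ b) :
    ∫ a in Ioi b, btK t a = btW t b := by
  have := integral_Ioi_of_hasDerivAt_of_nonneg' (g := fun a => -(btW t a)) (l := 0)
    (fun x _ => hasDerivAt_neg_btW t x)
    (fun x hx => btK_nonneg ht.le (hb.trans hx.le))
    (tendsto_neg_btW ht)
  simpa using this

lemma integrableOn_mul_btK {t : ℝ} (ht : 0 < t) :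
    IntegrableOn (fun a => a * btK t a) (Ioi 0) := by
  apply integrableOn_Ioi_deriv_of_nonneg' (g := btA t) (l := 1)
    (fun x _ => hasDerivAt_btA t x)
    (fun x hx => mul_nonneg hx.le (btK_nonneg ht.le hx.le))
    (tendsto_btA ht)

lemma integral_mul_btK_Ioc {t : ℝ} (ht : 0 < t) {b : ℝ} (hb : 0 ≤ b) :
    ∫ a in Ioc 0 b, a * btK t a = btA t b := by
  have hcont : Continuous (fun a => a * btK t a) := continuous_id.mul (continuous_btK t)
  have h1 : ∫ a in (0:ℝ)..b, a * btK t a = btA t b - btA t 0 :=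
    intervalIntegral.integral_eq_sub_of_hasDerivAt
      (fun x _ => hasDerivAt_btA t x) (hcont.intervalIntegrable 0 b)
  have hA0 : btA t 0 = 0 := by unfold btA btW btE; simp
  rw [← intervalIntegral.integral_of_le hb, h1, hA0, sub_zero]

lemma integrableOn_btK_min {t : ℝ} (ht : 0 < t) (b : ℝ) :
    IntegrableOn (fun a => btK t a * min b a) (Ioi 0) := by
  rcases le_or_gt b 0 with hb | hb
  · exact IntegrableOn.congr_fun ((integrableOn_btK ht le_rfl).mul_const b)
      (fun a ha => by rw [min_eq_left (hb.trans (le_of_lt ha))]) measurableSet_Ioi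
  · rw [← Ioc_union_Ioi_eq_Ioi hb.le]
    apply IntegrableOn.union
    · exact (((continuous_btK t).mul (continuous_const.min continuous_id)).integrableOn_Icc
        (a := 0) (b := b)).mono_set Ioc_subset_Icc_self
    · exact IntegrableOn.congr_fun ((integrableOn_btK ht hb.le).mul_const b)
        (fun a ha => by rw [min_eq_left (le_of_lt ha)]) measurableSet_Ioi

lemma integral_btK_min {t : ℝ} (ht : 0 < t) {b : ℝ} (hb : 0 < b) :
    ∫ a in Ioi 0, btK t a * min b a = 1 - btE t b := by
  have hIoc : IntegrableOn (fun a => btK t a * min b a) (Ioc 0 b) :=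
    ((((continuous_btK t).mul (continuous_const.min continuous_id)).integrableOn_Icc
      (a := 0) (b := b))).mono_set Ioc_subset_Icc_self
  have hIoi : IntegrableOn (fun a => btK t a * min b a) (Ioi b) :=
    IntegrableOn.congr_fun ((integrableOn_btK ht hb.le).mul_const b)
      (fun a ha => by rw [min_eq_left (le_of_lt ha)]) measurableSet_Ioi
  have hsplit := setIntegral_union (μ := volume) (f := fun a => btK t a * min b a)
    (Ioc_disjoint_Ioi le_rfl) measurableSet_Ioi hIoc hIoi
  rw [← Ioc_union_Ioi_eq_Ioi hb.le, hsplit]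
  have h1 : ∫ a in Ioc 0 b, btK t a * min b a = ∫ a in Ioc 0 b, a * btK t a := by
    apply setIntegral_congr_fun measurableSet_Ioc
    intro a ha
    show btK t a * min b a = a * btK t a
    rw [min_eq_right ha.2]; ring
  have h2 : ∫ a in Ioi b, btK t a * min b a = ∫ a in Ioi b, btK t a * b := by
    apply setIntegral_congr_fun measurableSet_Ioi
    intro a ha
    show btK t a * min b a = btK t a * b
    rw [min_eq_left (le_of_lt ha)]
  rw [h1, h2, integral_mul_btK_Ioc ht hb.le, integral_mul_const, integral_btK_Ioi ht hb.le]
  unfold btA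
  ring

lemma bt_Tform {a : ℝ} (ha : 0 ≤ a) (x : ℝ) :
    min |x| a * Real.sign x = max (min x a) (-a) := by
  rcases lt_trichotomy x 0 with hx | hx | hx
  · rw [Real.sign_of_neg hx, abs_of_neg hx, mul_neg_one,
      min_eq_left (le_of_lt (lt_of_lt_of_le hx ha))]
    rcases le_total (-x) a with h | h
    · rw [min_eq_left h, neg_neg, max_eq_left (by linarith)]
    · rw [min_eq_right h, max_eq_right (by linarith)]
  · subst hx
    rw [Real.sign_zero, mul_zero, min_eq_left ha, max_eq_left (neg_nonpos.2 ha)]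
  · rw [Real.sign_of_pos hx, abs_of_pos hx, mul_one,
      max_eq_left (le_min (by linarith) (by linarith))]

lemma measurable_realSign : Measurable Real.sign := by
  unfold Real.sign
  exact Measurable.ite measurableSet_Iio measurable_const
    (Measurable.ite measurableSet_Ioi measurable_const measurable_const)

lemma bt_pointwise (t x : ℝ) :
    Real.exp (t*x - t^2*x^2/2)
      ≤ 1 + Real.sign x * (1 - Real.exp (-(t*|x|) - t^2*x^2/2)) := by
  rcases lt_trichotomy x 0 with hx | hx | hx
  · rw [Real.sign_of_neg hx, abs_of_neg hx]
    have h : -(t * -x) - t^2*x^2/2 = t*x - t^2*x^2/2 := by ring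
    rw [h]
    linarith
  · subst hx
    norm_num [Real.sign_zero]
  · rw [Real.sign_of_pos hx, abs_of_pos hx, one_mul]
    have h1 : Real.exp (t*x - t^2*x^2/2) * Real.exp (t^2*x^2/2) = Real.exp (t*x) := by
      rw [← Real.exp_add]; ring_nf
    have h2 : Real.exp (-(t*x) - t^2*x^2/2) * Real.exp (t^2*x^2/2) = Real.exp (-(t*x)) := by
      rw [← Real.exp_add]; ring_nf
    have h3 : Real.exp (t*x) + Real.exp (-(t*x)) ≤ 2 * Real.exp (t^2*x^2/2) := by
      have hc := Real.cosh_le_exp_half_sq (t*x)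
      rw [Real.cosh_eq] at hc
      have h4 : ((t*x)^2/2) = t^2*x^2/2 := by ring
      rw [h4] at hc
      linarith
    nlinarith [Real.exp_pos (t^2*x^2/2), Real.exp_pos (-(t*x) - t^2*x^2/2),
      Real.exp_pos (t*x - t^2*x^2/2)]

lemma bt_rep {t : ℝ} (ht : 0 < t) (x : ℝ) :
    ∫ a in Ioi (0:ℝ), btK t a * max (min x a) (-a)
      = Real.sign x * (1 - Real.exp (-(t*|x|) - t^2*x^2/2)) := by
  have hcong : ∫ a in Ioi (0:ℝ), btK t a * max (min x a) (-a)
      = ∫ a in Ioi (0:ℝ), Real.sign x * (btK t a * min |x| a) := by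
    apply setIntegral_congr_fun measurableSet_Ioi
    intro a ha
    show btK t a * max (min x a) (-a) = Real.sign x * (btK t a * min |x| a)
    rw [← bt_Tform (le_of_lt ha) x]; ring
  rw [hcong, integral_const_mul]
  rcases eq_or_ne x 0 with rfl | hx
  · simp [Real.sign_zero]
  · have hb : 0 < |x| := abs_pos.2 hx
    rw [integral_btK_min ht hb]
    congr 2
    unfold btE
    rw [sq_abs]

lemma bt_repInt {t : ℝ} (ht : 0 < t) (x : ℝ) :
    IntegrableOn (fun a => btK t a * max (min x a) (-a)) (Ioi 0) := by
  apply IntegrableOn.congr_fun ((integrableOn_btK_min ht |x|).const_mul (Real.sign x))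
    _ measurableSet_Ioi
  intro a ha
  show Real.sign x * (btK t a * min |x| a) = btK t a * max (min x a) (-a)
  rw [← bt_Tform (le_of_lt ha) x]; ring

lemma bt_step {Ω : Type*} {m : MeasurableSpace Ω} {μ : Measure Ω} [IsProbabilityMeasure μ]
    (F : Filtration ℕ m) (n : ℕ) {t : ℝ} (ht : 0 < t)
    {W d : Ω → ℝ} {C : ℝ}
    (hWm : StronglyMeasurable[F n] W) (hW0 : ∀ ω, 0 ≤ W ω) (hWC : ∀ ω, W ω ≤ C)
    (hd : Measurable d)
    (hheavy : ∀ a : ℝ, 0 < a →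
      ∀ᵐ ω ∂μ, (μ[fun ω => max (min (d ω) a) (-a) | F n]) ω ≤ 0) :
    ∫ ω, W ω * Real.exp (t * d ω - t^2 * (d ω)^2/2) ∂μ ≤ ∫ ω, W ω ∂μ := by
  have hne : Nonempty Ω := by
    by_contra h
    have h1 : μ Set.univ = 0 := by
      rw [Set.univ_eq_empty_iff.2 (not_nonempty_iff.1 h)]; simp
    simp [measure_univ] at h1
  obtain ⟨ω₀⟩ := hne
  have hWmeas : Measurable W := hWm.measurable.mono (F.le n) le_rfl
  have hC0 : 0 ≤ C := (hW0 ω₀).trans (hWC ω₀)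
  have hWint : Integrable W μ := by
    refine Integrable.mono' (integrable_const C) hWmeas.aestronglyMeasurable
      (Filter.Eventually.of_forall fun ω => ?_)
    rw [Real.norm_eq_abs, abs_of_nonneg (hW0 ω)]; exact hWC ω
  set V : Ω → ℝ := fun ω =>
    Real.sign (d ω) * (1 - Real.exp (-(t*|d ω|) - t^2*(d ω)^2/2)) with hV
  have hVmeas : Measurable V := by
    apply (measurable_realSign.comp hd).mul
    exact measurable_const.sub
      (((hd.abs.const_mul t).neg.sub (((hd.pow_const 2).const_mul (t^2)).div_const 2)).exp)
  have hVbd : ∀ ω, |V ω| ≤ 1 := by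
    intro ω
    have h1 : |Real.sign (d ω)| ≤ 1 := by
      rcases Real.sign_apply_eq (d ω) with h | h | h <;> rw [h] <;> norm_num
    have h2 : |1 - Real.exp (-(t*|d ω|) - t^2*(d ω)^2/2)| ≤ 1 := by
      have h3 : Real.exp (-(t*|d ω|) - t^2*(d ω)^2/2) ≤ 1 := by
        rw [← Real.exp_zero]
        apply Real.exp_le_exp.2
        have h4 : 0 ≤ t*|d ω| := mul_nonneg ht.le (abs_nonneg _)
        nlinarith [sq_nonneg (d ω), sq_nonneg t]
      have h5 := Real.exp_pos (-(t*|d ω|) - t^2*(d ω)^2/2)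
      rw [abs_le]; constructor <;> linarith
    rw [hV, abs_mul]
    calc |Real.sign (d ω)| * |1 - Real.exp (-(t*|d ω|) - t^2*(d ω)^2/2)|
        ≤ 1 * 1 := mul_le_mul h1 h2 (abs_nonneg _) zero_le_one
      _ = 1 := by norm_num
  have hWV : Integrable (fun ω => W ω * V ω) μ := by
    refine Integrable.mono' (integrable_const C) (hWmeas.mul hVmeas).aestronglyMeasurable
      (Filter.Eventually.of_forall fun ω => ?_)
    rw [Real.norm_eq_abs, abs_mul]
    calc |W ω| * |V ω| ≤ C * 1 :=
          mul_le_mul (by rw [abs_of_nonneg (hW0 ω)]; exact hWC ω) (hVbd ω) (abs_nonneg _) hC0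
      _ = C := by norm_num
  have hGint : Integrable (fun ω => W ω * Real.exp (t * d ω - t^2 * (d ω)^2/2)) μ := by
    refine Integrable.mono' (integrable_const (C * Real.exp (1/2)))
      (hWmeas.mul (((hd.const_mul t).sub
        (((hd.pow_const 2).const_mul (t^2)).div_const 2)).exp)).aestronglyMeasurable
      (Filter.Eventually.of_forall fun ω => ?_)
    rw [Real.norm_eq_abs, abs_mul, abs_of_nonneg (hW0 ω), abs_of_nonneg (Real.exp_pos _).le]
    apply mul_le_mul (hWC ω) _ (Real.exp_pos _).le hC0
    apply Real.exp_le_exp.2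
    nlinarith [sq_nonneg (t * d ω - 1)]
  -- the key inequality : ∫ W V ≤ 0
  have hcore : ∫ ω, W ω * V ω ∂μ ≤ 0 := by
    set ν : Measure ℝ := volume.restrict (Ioi (0:ℝ)) with hν
    set G : Ω → ℝ → ℝ := fun ω a => btK t a * (W ω * max (min (d ω) a) (-a)) with hG
    have hrep : ∀ ω, W ω * V ω = ∫ a, G ω a ∂ν := by
      intro ω
      have h1 : W ω * V ω = ∫ a in Ioi (0:ℝ), W ω * (btK t a * max (min (d ω) a) (-a)) := by
        rw [integral_const_mul, bt_rep ht]
      rw [h1]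
      apply setIntegral_congr_fun measurableSet_Ioi
      intro a _
      show W ω * (btK t a * max (min (d ω) a) (-a)) = G ω a
      rw [hG]; ring
    have hmeasG : AEStronglyMeasurable (Function.uncurry G) (μ.prod ν) := by
      apply Measurable.aestronglyMeasurable
      exact (((continuous_btK t).measurable).comp measurable_snd).mul
        ((hWmeas.comp measurable_fst).mul
          (((hd.comp measurable_fst).min measurable_snd).max measurable_snd.neg))
    have hae : ∀ᵐ p ∂(μ.prod ν), p.2 ∈ Ioi (0:ℝ) := by
      have h1 : μ.prod ν = (μ.prod volume).restrict ((Set.univ : Set Ω) ×ˢ Set.Ioi (0:ℝ)) := by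
        rw [hν, ← Measure.prod_restrict, Measure.restrict_univ]
      rw [h1]
      filter_upwards [ae_restrict_mem (MeasurableSet.univ.prod measurableSet_Ioi)] with p hp
      exact hp.2
    have h_aK : Integrable (fun a => btK t a * a) ν := by
      apply IntegrableOn.congr_fun (integrableOn_mul_btK ht) _ measurableSet_Ioi
      intro a _
      exact mul_comm a (btK t a)
    have hdom : Integrable (fun p : Ω × ℝ => C * (btK t p.2 * p.2)) (μ.prod ν) :=
      (integrable_const C).mul_prod h_aK
    have hGprod : Integrable (Function.uncurry G) (μ.prod ν) := by
      refine Integrable.mono' hdom hmeasG ?_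
      filter_upwards [hae] with p hp
      have hp0 : (0:ℝ) ≤ p.2 := le_of_lt hp
      have hT : |max (min (d p.1) p.2) (-p.2)| ≤ p.2 := by
        rw [abs_le]
        constructor
        · exact le_max_right _ _
        · exact max_le (min_le_right _ _) (by linarith)
      have hWT : |W p.1 * max (min (d p.1) p.2) (-p.2)| ≤ C * p.2 := by
        rw [abs_mul]
        exact mul_le_mul (by rw [abs_of_nonneg (hW0 p.1)]; exact hWC p.1) hT (abs_nonneg _) hC0
      show ‖btK t p.2 * (W p.1 * max (min (d p.1) p.2) (-p.2))‖ ≤ C * (btK t p.2 * p.2)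
      rw [Real.norm_eq_abs, abs_mul, abs_of_nonneg (btK_nonneg ht.le hp0)]
      calc btK t p.2 * |W p.1 * max (min (d p.1) p.2) (-p.2)|
          ≤ btK t p.2 * (C * p.2) :=
            mul_le_mul_of_nonneg_left hWT (btK_nonneg ht.le hp0)
        _ = C * (btK t p.2 * p.2) := by ring
    have hswap : ∫ ω, ∫ a, G ω a ∂ν ∂μ = ∫ a, ∫ ω, G ω a ∂μ ∂ν :=
      integral_integral_swap hGprod
    have h2 : ∫ ω, W ω * V ω ∂μ = ∫ a, ∫ ω, G ω a ∂μ ∂ν := by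
      rw [← hswap]
      exact integral_congr_ae (Filter.Eventually.of_forall hrep)
    rw [h2]
    apply integral_nonpos_of_ae
    rw [hν]
    filter_upwards [ae_restrict_mem measurableSet_Ioi] with a ha
    have hTm : Measurable (fun ω => max (min (d ω) a) (-a)) :=
      (hd.min measurable_const).max measurable_const
    have hTint : Integrable (fun ω => max (min (d ω) a) (-a)) μ := by
      refine Integrable.mono' (integrable_const a) hTm.aestronglyMeasurable
        (Filter.Eventually.of_forall fun ω => ?_)
      rw [Real.norm_eq_abs, abs_le]
      exact ⟨le_max_right _ _, max_le (min_le_right _ _) (by linarith [le_of_lt (Set.mem_Ioi.1 ha)])⟩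
    have hWTint : Integrable (W * fun ω => max (min (d ω) a) (-a)) μ := by
      refine Integrable.mono' (integrable_const (C * a))
        ((hWmeas.mul hTm).aestronglyMeasurable) (Filter.Eventually.of_forall fun ω => ?_)
      show ‖W ω * max (min (d ω) a) (-a)‖ ≤ C * a
      rw [Real.norm_eq_abs, abs_mul]
      refine mul_le_mul (by rw [abs_of_nonneg (hW0 ω)]; exact hWC ω) ?_ (abs_nonneg _) hC0
      rw [abs_le]
      exact ⟨le_max_right _ _, max_le (min_le_right _ _) (by linarith [le_of_lt (Set.mem_Ioi.1 ha)])⟩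
    have hpull := condExp_mul_of_stronglyMeasurable_left hWm hWTint hTint
    have hinner : ∫ ω, W ω * max (min (d ω) a) (-a) ∂μ ≤ 0 := by
      have h8 : ∫ ω, W ω * max (min (d ω) a) (-a) ∂μ
          = ∫ ω, (μ[W * fun ω => max (min (d ω) a) (-a)|F n]) ω ∂μ :=
        (integral_condExp (F.le n)).symm
      rw [h8, integral_congr_ae hpull]
      apply integral_nonpos_of_ae
      filter_upwards [hheavy a ha] with ω hω
      show W ω * (μ[fun ω => max (min (d ω) a) (-a)|F n]) ω ≤ 0
      exact mul_nonpos_iff.2 (Or.inl ⟨hW0 ω, hω⟩)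
    have h9 : ∫ ω, G ω a ∂μ = btK t a * ∫ ω, W ω * max (min (d ω) a) (-a) ∂μ :=
      integral_const_mul _ _
    rw [h9]
    exact mul_nonpos_iff.2 (Or.inl ⟨btK_nonneg ht.le (le_of_lt ha), hinner⟩)
  -- assemble
  have hpt : ∀ ω, W ω * Real.exp (t * d ω - t^2 * (d ω)^2/2) ≤ W ω + W ω * V ω := by
    intro ω
    have h1 := bt_pointwise t (d ω)
    have h2 := mul_le_mul_of_nonneg_left h1 (hW0 ω)
    have h3 : W ω * (1 + Real.sign (d ω) *
        (1 - Real.exp (-(t*|d ω|) - t^2*(d ω)^2/2))) = W ω + W ω * V ω := by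
      rw [hV]; ring
    calc W ω * Real.exp (t * d ω - t^2 * (d ω)^2/2)
        = W ω * Real.exp (t * d ω - t^2 * (d ω)^2/2) := rfl
      _ ≤ _ := h2
      _ = W ω + W ω * V ω := h3
  have h4 : ∫ ω, W ω * Real.exp (t * d ω - t^2 * (d ω)^2/2) ∂μ
      ≤ ∫ ω, (W ω + W ω * V ω) ∂μ :=
    integral_mono hGint (hWint.add hWV) hpt
  rw [integral_add hWint hWV] at h4
  linarith

end BTAux

theorem bercu_touati_heavy_on_left
    {Ω : Type*} {m : MeasurableSpace Ω} {μ : Measure Ω} [IsProbabilityMeasure μ]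
    (F : Filtration ℕ m) (S : ℕ → Ω → ℝ)
    (hmart : Martingale S F μ)
    (hL2 : ∀ n, MemLp (S n) 2 μ)
    (h0 : S 0 = 0)
    (hheavy : ∀ n, ∀ a > (0 : ℝ),
      ∀ᵐ ω ∂μ,
        (μ[fun ω => min |S (n + 1) ω - S n ω| a * Real.sign (S (n + 1) ω - S n ω)
            | F n]) ω ≤ 0)
    (n : ℕ) (x y : ℝ) (hx : 0 < x) (hy : 0 < y) :
    μ {ω | x ≤ S n ω ∧ ∑ i ∈ range n, (S (i + 1) ω - S i ω) ^ 2 ≤ y}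
      ≤ ENNReal.ofReal (Real.exp (-x ^ 2 / (2 * y))) := by
  have ht : 0 < x / y := div_pos hx hy
  set t : ℝ := x / y with htdef
  set Wn : ℕ → Ω → ℝ := fun k ω =>
    Real.exp (t * S k ω - t^2/2 * ∑ i ∈ range k, (S (i + 1) ω - S i ω) ^ 2) with hWndef
  have hSmeas : ∀ i, Measurable (S i) := fun i =>
    (hmart.stronglyAdapted i).measurable.mono (F.le i) le_rfl
  have hWnmeasF : ∀ k, Measurable[F k] (Wn k) := by
    intro k
    have hS : ∀ i, i ≤ k → Measurable[F k] (S i) := fun i hi =>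
      (hmart.stronglyAdapted i).measurable.mono (F.mono hi) le_rfl
    apply Measurable.exp
    apply Measurable.sub ((hS k le_rfl).const_mul t)
    apply Measurable.const_mul
    apply Finset.measurable_sum
    intro i hi
    have hik : i + 1 ≤ k := Nat.succ_le_of_lt (mem_range.1 hi)
    exact ((hS (i+1) hik).sub (hS i (Nat.le_of_succ_le hik))).pow_const 2
  have harg : ∀ k (ω : Ω),
      t * S k ω - t^2/2 * ∑ i ∈ range k, (S (i + 1) ω - S i ω) ^ 2 ≤ k * (1/2) := by
    intro k ω
    have htel : S k ω = ∑ i ∈ range k, (S (i + 1) ω - S i ω) := by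
      have h1 := Finset.sum_range_sub (fun i => S i ω) k
      rw [show S 0 ω = 0 by rw [h0]; rfl] at h1
      linarith
    rw [htel, Finset.mul_sum, Finset.mul_sum, ← Finset.sum_sub_distrib]
    calc ∑ i ∈ range k, (t * (S (i + 1) ω - S i ω) - t^2/2 * (S (i + 1) ω - S i ω) ^ 2)
        ≤ ∑ _i ∈ range k, (1/2 : ℝ) := by
          apply Finset.sum_le_sum
          intro i _
          nlinarith [sq_nonneg (t * (S (i + 1) ω - S i ω) - 1)]
      _ = k * (1/2) := by
          rw [Finset.sum_const, Finset.card_range, nsmul_eq_mul]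
  have hWnbd : ∀ k (ω : Ω), Wn k ω ≤ Real.exp (k * (1/2)) := fun k ω =>
    Real.exp_le_exp.2 (harg k ω)
  have hint : ∀ k, ∫ ω, Wn k ω ∂μ ≤ 1 := by
    intro k
    induction k with
    | zero =>
      have h1 : Wn 0 = fun _ => (1:ℝ) := by
        funext ω
        simp only [hWndef]
        simp [h0]
      rw [h1]
      simp
    | succ k ih =>
      have hexpand : ∀ ω : Ω, Wn (k+1) ω = Wn k ω *
          Real.exp (t * (S (k+1) ω - S k ω) - t^2 * (S (k+1) ω - S k ω)^2/2) := by
        intro ω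
        simp only [hWndef]
        rw [← Real.exp_add]
        congr 1
        rw [Finset.sum_range_succ]
        ring
      have hh : ∀ a : ℝ, 0 < a → ∀ᵐ ω ∂μ,
          (μ[fun ω => max (min ((fun ω => S (k+1) ω - S k ω) ω) a) (-a)|F k]) ω ≤ 0 := by
        intro a ha
        have h2 := hheavy k a ha
        have h3 : (fun ω => min |S (k + 1) ω - S k ω| a * Real.sign (S (k + 1) ω - S k ω))
            = fun ω => max (min ((fun ω => S (k+1) ω - S k ω) ω) a) (-a) :=
          funext fun ω => bt_Tform ha.le _
        rwa [h3] at h2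
      calc ∫ ω, Wn (k+1) ω ∂μ
          = ∫ ω, Wn k ω * Real.exp (t * (S (k+1) ω - S k ω)
              - t^2 * (S (k+1) ω - S k ω)^2/2) ∂μ :=
            integral_congr_ae (Filter.Eventually.of_forall hexpand)
        _ ≤ ∫ ω, Wn k ω ∂μ :=
            bt_step F k ht ((hWnmeasF k).stronglyMeasurable)
              (fun ω => (Real.exp_pos _).le) (hWnbd k)
              ((hSmeas (k+1)).sub (hSmeas k)) hh
        _ ≤ 1 := ih
  -- Markov step
  have hWnint : Integrable (Wn n) μ := by
    refine Integrable.mono' (integrable_const (Real.exp (n * (1/2))))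
      (((hWnmeasF n).mono (F.le n) le_rfl).aestronglyMeasurable)
      (Filter.Eventually.of_forall fun ω => ?_)
    rw [Real.norm_eq_abs, abs_of_nonneg (Real.exp_pos _).le]
    exact hWnbd n ω
  have hsub : {ω | x ≤ S n ω ∧ ∑ i ∈ range n, (S (i + 1) ω - S i ω) ^ 2 ≤ y}
      ⊆ {ω | Real.exp (x^2/(2*y)) ≤ Wn n ω} := by
    intro ω hω
    obtain ⟨h1, h2⟩ := hω
    have e1 : t * x ≤ t * S n ω := mul_le_mul_of_nonneg_left h1 ht.le
    have e2 : t^2/2 * ∑ i ∈ range n, (S (i + 1) ω - S i ω) ^ 2 ≤ t^2/2 * y :=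
      mul_le_mul_of_nonneg_left h2 (by positivity)
    have e3 : t * x = x^2/y := by rw [htdef]; field_simp
    have e4 : t^2/2 * y = x^2/(2*y) := by rw [htdef]; field_simp
    have e5 : x^2/(2*y) ≤ t * S n ω
        - t^2/2 * ∑ i ∈ range n, (S (i + 1) ω - S i ω) ^ 2 := by
      have e6 : x^2/y - x^2/(2*y) = x^2/(2*y) := by field_simp; ring
      nlinarith [e1, e2]
    exact Real.exp_le_exp.2 e5
  have hm := mul_meas_ge_le_integral_of_nonneg
    (Filter.Eventually.of_forall fun ω => (Real.exp_pos _).le : 0 ≤ᵐ[μ] Wn n) hWnint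
    (Real.exp (x^2/(2*y)))
  have h6 : Real.exp (x^2/(2*y))
      * (μ {ω | Real.exp (x^2/(2*y)) ≤ Wn n ω}).toReal ≤ 1 := le_trans hm (hint n)
  have hεpos := Real.exp_pos (x^2/(2*y))
  have h5 : (μ {ω | Real.exp (x^2/(2*y)) ≤ Wn n ω}).toReal ≤ Real.exp (-(x^2/(2*y))) := by
    rw [Real.exp_neg, ← one_div, le_div_iff₀ hεpos]
    linarith [h6]
  calc μ {ω | x ≤ S n ω ∧ ∑ i ∈ range n, (S (i + 1) ω - S i ω) ^ 2 ≤ y}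
      ≤ μ {ω | Real.exp (x^2/(2*y)) ≤ Wn n ω} := measure_mono hsub
    _ = ENNReal.ofReal ((μ {ω | Real.exp (x^2/(2*y)) ≤ Wn n ω}).toReal) :=
        (ENNReal.ofReal_toReal (measure_ne_top μ _)).symm
    _ ≤ ENNReal.ofReal (Real.exp (-(x^2/(2*y)))) := ENNReal.ofReal_le_ofReal h5
    _ = ENNReal.ofReal (Real.exp (-x ^ 2 / (2 * y))) := by rw [neg_div]
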